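/- Let M = ⟨F, ev⟩ be a Veltman model on F = ⟨W, R, {S_w | w ∈ W}⟩ and M^ue its ultrafilter extension. Then for every formula φ, every world x ∈ W, and every element ⟨Π_x, σ⟩ of W^ue whose first component is the principal ultrafilter Π_x = {A ⊆ W | x ∈ A}: M, x ⊩ φ if and only if M^ue, ⟨Π_x, σ⟩ ⊩ φ. -/

import Mathlib

/-- Formulas of interpretability logic. -/
inductive ILFormula : Type where
  | atom : ℕ → ILFormula
  | falsum : ILFormula
  | impl : ILFormula → ILFormula → ILFormula
  | box : ILFormula → ILFormula
  | rhd : ILFormula → ILFormula → ILFormula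
  deriving DecidableEq

namespace ILFormula
def neg (α : ILFormula) : ILFormula := impl α falsum
def dia (α : ILFormula) : ILFormula := neg (box (neg α))
def conj (α β : ILFormula) : ILFormula := neg (impl α (neg β))
def disj (α β : ILFormula) : ILFormula := impl (neg α) β
end ILFormula

open ILFormula

/-- The Hilbert calculus IL: classical propositional logic plus K, GL, J1–J5,
    with modus ponens and necessitation. -/
inductive ILProv : ILFormula → Prop where
  | imp1 (α β) : ILProv (impl α (impl β α))
  | imp2 (α β γ) : ILProv (impl (impl α (impl β γ)) (impl (impl α β) (impl α γ)))
  | dne (α) : ILProv (impl (impl (impl α falsum) falsum) α)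
  | axK (α β) : ILProv (impl (box (impl α β)) (impl (box α) (box β)))
  | axGL (α) : ILProv (impl (box (impl (box α) α)) (box α))
  | axJ1 (α β) : ILProv (impl (box (impl α β)) (rhd α β))
  | axJ2 (α β γ) : ILProv (impl (conj (rhd α β) (rhd β γ)) (rhd α γ))
  | axJ3 (α β γ) : ILProv (impl (conj (rhd α γ) (rhd β γ)) (rhd (disj α β) γ))
  | axJ4 (α β) : ILProv (impl (rhd α β) (impl (dia α) (dia β)))
  | axJ5 (α) : ILProv (rhd (dia α) α)
  | mp {α β} : ILProv (impl α β) → ILProv α → ILProv β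
  | nec {α} : ILProv α → ILProv (box α)

/-- Derivability in IL from a finite set of hypotheses, with necessitation
    not applied to hypotheses. -/
inductive ILProvFrom (Γ : Finset ILFormula) : ILFormula → Prop where
  | hyp {φ} : φ ∈ Γ → ILProvFrom Γ φ
  | thm {φ} : ILProv φ → ILProvFrom Γ φ
  | mp {φ ψ} : ILProvFrom Γ (impl φ ψ) → ILProvFrom Γ φ → ILProvFrom Γ ψ

/-- A Veltman frame. -/
structure VeltmanFrame (W : Type*) : Type _ where
  nonempty : Nonempty W
  R : W → W → Prop
  S : W → W → W → Prop
  R_trans : ∀ {x y z}, R x y → R y z → R x z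
  R_cwf : ¬ ∃ c : ℕ → W, ∀ n, R (c n) (c (n + 1))
  S_dom : ∀ {w u v}, S w u v → R w u ∧ R w v
  S_refl : ∀ {w u}, R w u → S w u u
  S_trans : ∀ {w u v x}, S w u v → S w v x → S w u x
  R_sub_S : ∀ {w u v}, R w u → R w v → R u v → S w u v

variable {W : Type*}

def Rinv (F : VeltmanFrame W) (X : Set W) : Set W := {w | ∃ x ∈ X, F.R w x}

def Rinvhat (F : VeltmanFrame W) (Y : Set W) : Set W := {x | ∀ y, F.R x y → y ∈ Y}

def Sinv (F : VeltmanFrame W) (X Y : Set W) : Set W :=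
  {w | ∀ x ∈ X, F.R w x → ∃ y ∈ Y, F.S w x y}

/-- The algebraic interpretation of a formula in a Veltman frame under valuation `e`. -/
def interp (F : VeltmanFrame W) (e : ℕ → Set W) : ILFormula → Set W
  | .atom n => e n
  | .falsum => ∅
  | .impl α β => (interp F e α)ᶜ ∪ interp F e β
  | .box α => Rinvhat F (interp F e α)
  | .rhd α β => Sinv F (interp F e α) (interp F e β)

/-- Forcing in a Veltman model `⟨F, ev⟩`. -/
def forces (F : VeltmanFrame W) (ev : ℕ → Set W) : ILFormula → W → Prop
  | .atom n, w => w ∈ ev n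
  | .falsum, _ => False
  | .impl α β, w => forces F ev α w → forces F ev β w
  | .box α, w => ∀ v, F.R w v → forces F ev α v
  | .rhd α β, w => ∀ u, F.R w u → forces F ev α u → ∃ v, F.S w u v ∧ forces F ev β v

/-- The filter-assuring successor relation `f ≺_l g`. -/
def Assur (F : VeltmanFrame W) (l : Set (Set W)) (f g : Ultrafilter W) : Prop :=
  ∀ (A : Set W) (T : Finset (Set W)), (↑T : Set (Set W)) ⊆ l →
    Sinv F Aᶜ (⋃ S ∈ T, Sᶜ) ∈ f → A ∈ g ∧ Rinvhat F A ∈ g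

/-- A proper filter of subsets of `W`. -/
def IsProperFilter (l : Set (Set W)) : Prop :=
  l.Nonempty ∧ ∅ ∉ l ∧ (∀ A ∈ l, ∀ B : Set W, A ⊆ B → B ∈ l) ∧
    (∀ A ∈ l, ∀ B ∈ l, A ∩ B ∈ l)

/-- Worlds of the ultrafilter extension: an ultrafilter with a sequence of labels. -/
abbrev UEWorld (W : Type*) := Ultrafilter W × List (Set (Set W))

/-- The domain `W^ue` of the ultrafilter extension, generated inductively. -/
inductive InWue (F : VeltmanFrame W) : UEWorld W → Prop where
  | nil (f : Ultrafilter W) : InWue F (f, [])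
  | cons {f g : Ultrafilter W} {σ : List (Set (Set W))} {l : Set (Set W)} :
      InWue F (f, σ) → Assur F l f g → InWue F (g, σ ++ [l])

/-- The one-step relation of the ultrafilter extension. -/
def RueOne (F : VeltmanFrame W) (p q : UEWorld W) : Prop :=
  ∃ l : Set (Set W), q.2 = p.2 ++ [l] ∧ Assur F l p.1 q.1

/-- `R^ue`: the transitive closure of the one-step relation. -/
def Rue (F : VeltmanFrame W) : UEWorld W → UEWorld W → Prop :=
  Relation.TransGen (RueOne F)

/-- `S^ue_p`: the smallest reflexive transitive relation containing the
    restriction of `R^ue` to `R^ue[p]` and the one-step `S` relation. -/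
inductive Sue (F : VeltmanFrame W) (p : UEWorld W) : UEWorld W → UEWorld W → Prop where
  | refl (q) : Rue F p q → Sue F p q q
  | ofR {q r} : Rue F p q → Rue F p r → Rue F q r → Sue F p q r
  | one {q r} : Rue F p q → Rue F p r → q.2[p.2.length]? = r.2[p.2.length]? → Sue F p q r
  | trans {q r s} : Sue F p q r → Sue F p r s → Sue F p q s

/-- Forcing in the ultrafilter extension `M^ue`. -/
def ueForces (F : VeltmanFrame W) (ev : ℕ → Set W) : ILFormula → UEWorld W → Prop
  | .atom n, p => ev n ∈ p.1
  | .falsum, _ => False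
  | .impl α β, p => ueForces F ev α p → ueForces F ev β p
  | .box α, p => ∀ q : UEWorld W, InWue F q → Rue F p q → ueForces F ev α q
  | .rhd α β, p => ∀ q : UEWorld W, InWue F q → Rue F p q → ueForces F ev α q →
      ∃ r : UEWorld W, InWue F r ∧ Sue F p q r ∧ ueForces F ev β r

/-- Conjunction of a finite list of formulas (`⊤` for the empty list). -/
def conjList : List ILFormula → ILFormula
  | [] => impl falsum falsum
  | φ :: L => conj φ (conjList L)

/-- The Pencil frame condition. -/
def Pencil (F : VeltmanFrame W) : Prop :=
  ∀ x y z u v : W, F.R x y → F.S x y z → F.R z u → F.R y v → F.S x v u → F.R y u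

/-! ### Auxiliary lemmas for the truth lemma -/

section Aux

variable {W' : Type*}

lemma Sinv_mono (F : VeltmanFrame W') {X Y Y' : Set W'} (h : Y ⊆ Y') :
    Sinv F X Y ⊆ Sinv F X Y' := by
  intro w hw x hx hr
  obtain ⟨y, hy, hs⟩ := hw x hx hr
  exact ⟨y, h hy, hs⟩

lemma Sinv_compl_empty (F : VeltmanFrame W') (A : Set W') :
    Sinv F Aᶜ ∅ = Rinvhat F A := by
  ext w
  simp only [Sinv, Rinvhat, Set.mem_setOf_eq, Set.mem_empty_iff_false, Set.mem_compl_iff]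
  constructor
  · intro h y hr
    by_contra hy
    obtain ⟨z, hz, -⟩ := h y hy hr
    exact hz
  · intro h x hx hr
    exact absurd (h x hr) hx

lemma Sinv_inter_subset (F : VeltmanFrame W') (C₁ C₂ Y₁ Y₂ : Set W') :
    Sinv F C₁ᶜ Y₁ ∩ Sinv F C₂ᶜ Y₂ ⊆ Sinv F (C₁ ∩ C₂)ᶜ (Y₁ ∪ Y₂) := by
  rintro w ⟨h1, h2⟩ x hx hr
  rw [Set.mem_compl_iff, Set.mem_inter_iff] at hx
  by_cases hx1 : x ∈ C₁
  · have hx2 : x ∉ C₂ := fun h => hx ⟨hx1, h⟩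
    obtain ⟨y, hy, hs⟩ := h2 x hx2 hr
    exact ⟨y, Or.inr hy, hs⟩
  · obtain ⟨y, hy, hs⟩ := h1 x hx1 hr
    exact ⟨y, Or.inl hy, hs⟩

lemma Rinvhat_inter (F : VeltmanFrame W') (C₁ C₂ : Set W') :
    Rinvhat F (C₁ ∩ C₂) = Rinvhat F C₁ ∩ Rinvhat F C₂ := by
  ext w
  simp only [Rinvhat, Set.mem_setOf_eq, Set.mem_inter_iff]
  exact ⟨fun h => ⟨fun y hy => (h y hy).1, fun y hy => (h y hy).2⟩,
    fun h y hy => ⟨h.1 y hy, h.2 y hy⟩⟩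

lemma Rinvhat_mono (F : VeltmanFrame W') {C D : Set W'} (h : C ⊆ D) :
    Rinvhat F C ⊆ Rinvhat F D := fun _ hx y hy => h (hx y hy)

lemma Rinvhat_idem (F : VeltmanFrame W') (C : Set W') :
    Rinvhat F C ⊆ Rinvhat F (Rinvhat F C) :=
  fun _ hx y hxy z hyz => hx z (F.R_trans hxy hyz)

lemma Rinvhat_univ (F : VeltmanFrame W') : Rinvhat F (Set.univ : Set W') = Set.univ := by
  ext w; simp [Rinvhat]

lemma Sinv_key (F : VeltmanFrame W') {A B C Y : Set W'}
    (h : B ∩ (C ∩ Rinvhat F C) = ∅) :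
    Sinv F A B ∩ Sinv F Cᶜ Y ⊆ Sinv F A Y := by
  rintro w ⟨h1, h2⟩ u hu hru
  obtain ⟨v, hvB, hsv⟩ := h1 u hu hru
  have hv : v ∉ C ∨ ∃ z, F.R v z ∧ z ∉ C := by
    by_contra hc
    push_neg at hc
    have : v ∈ B ∩ (C ∩ Rinvhat F C) :=
      ⟨hvB, hc.1, fun z hz => by
        by_contra hzc; exact absurd ((hc.2 z hz)) (by intro h'; exact hzc h')⟩
    rw [h] at this
    exact this
  have hwv : F.R w v := (F.S_dom hsv).2
  rcases hv with hvC | ⟨z, hvz, hzC⟩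
  · obtain ⟨y, hyY, hsy⟩ := h2 v hvC hwv
    exact ⟨y, hyY, F.S_trans hsv hsy⟩
  · have hwz : F.R w z := F.R_trans hwv hvz
    obtain ⟨y, hyY, hsy⟩ := h2 z hzC hwz
    exact ⟨y, hyY, F.S_trans hsv (F.S_trans (F.R_sub_S hwv hwz hvz) hsy)⟩

/-- Construct an ultrafilter from a family closed under intersection. -/
lemma exists_ultrafilter_family (F : VeltmanFrame W') (T : Set (Set W')) (A₀ : Set W')
    (hW : Set.univ ∈ T)
    (hI : ∀ C₁ ∈ T, ∀ C₂ ∈ T, C₁ ∩ C₂ ∈ T)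
    (hNe : ∀ C ∈ T, (A₀ ∩ (C ∩ Rinvhat F C)).Nonempty) :
    ∃ u : Ultrafilter W', A₀ ∈ u ∧ ∀ C ∈ T, C ∈ u ∧ Rinvhat F C ∈ u := by
  let G : Filter W' :=
    { sets := {E | ∃ C ∈ T, A₀ ∩ (C ∩ Rinvhat F C) ⊆ E}
      univ_sets := ⟨Set.univ, hW, Set.subset_univ _⟩
      sets_of_superset := by
        rintro E E' ⟨C, hC, hsub⟩ hEE'
        exact ⟨C, hC, hsub.trans hEE'⟩
      inter_sets := by
        rintro E₁ E₂ ⟨C₁, h₁, s₁⟩ ⟨C₂, h₂, s₂⟩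
        refine ⟨C₁ ∩ C₂, hI _ h₁ _ h₂, ?_⟩
        rw [Rinvhat_inter]
        rintro x ⟨hx0, ⟨hx1, hx2⟩, hx3, hx4⟩
        exact ⟨s₁ ⟨hx0, hx1, hx3⟩, s₂ ⟨hx0, hx2, hx4⟩⟩ }
  have hG : G.NeBot := by
    rw [← Filter.forall_mem_nonempty_iff_neBot]
    rintro s ⟨C, hC, hsub⟩
    exact (hNe C hC).mono hsub
  refine ⟨Ultrafilter.of G, ?_, fun C hC => ⟨?_, ?_⟩⟩
  · exact Ultrafilter.of_le G ⟨Set.univ, hW, fun x hx => hx.1⟩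
  · exact Ultrafilter.of_le G ⟨C, hC, fun x hx => hx.2.1⟩
  · exact Ultrafilter.of_le G ⟨C, hC, fun x hx => hx.2.2⟩

lemma assur_box {F : VeltmanFrame W'} {l : Set (Set W')} {f g : Ultrafilter W'}
    (h : Assur F l f g) {E : Set W'} (hE : Rinvhat F E ∈ f) :
    E ∈ g ∧ Rinvhat F E ∈ g := by
  apply h E ∅ (by simp)
  have : (⋃ S ∈ (∅ : Finset (Set W')), Sᶜ) = (∅ : Set W') := by simp
  rw [this, Sinv_compl_empty]
  exact hE

lemma rue_box {F : VeltmanFrame W'} {p q : UEWorld W'} (h : Rue F p q) {E : Set W'}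
    (hE : Rinvhat F E ∈ p.1) : E ∈ q.1 ∧ Rinvhat F E ∈ q.1 := by
  induction h with
  | single h1 =>
    obtain ⟨l, -, ha⟩ := h1
    exact assur_box ha hE
  | tail _ h2 ih =>
    obtain ⟨l, -, ha⟩ := h2
    exact assur_box ha ih.2

lemma rue_shape {F : VeltmanFrame W'} {p q : UEWorld W'} (h : Rue F p q) :
    ∃ rest, rest ≠ [] ∧ q.2 = p.2 ++ rest := by
  induction h with
  | single h1 =>
    obtain ⟨l, heq, -⟩ := h1
    exact ⟨[l], by simp, heq⟩
  | tail _ h2 ih =>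
    obtain ⟨l, heq, -⟩ := h2
    obtain ⟨rest, hne, heq'⟩ := ih
    exact ⟨rest ++ [l], by simp, by rw [heq, heq', List.append_assoc]⟩

lemma rue_len {F : VeltmanFrame W'} {p q : UEWorld W'} (h : Rue F p q) :
    p.2.length < q.2.length := by
  obtain ⟨rest, hne, heq⟩ := rue_shape h
  rw [heq, List.length_append]
  have : 0 < rest.length := List.length_pos_iff.mpr hne
  omega

lemma getElem?_append_lt {α : Type*} (l₁ l₂ : List α) {n : ℕ} (h : n < l₁.length) :
    (l₁ ++ l₂)[n]? = l₁[n]? := by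
  rw [List.getElem?_append, if_pos h]

lemma sue_getElem {F : VeltmanFrame W'} {p q r : UEWorld W'} (h : Sue F p q r) :
    q.2[p.2.length]? = r.2[p.2.length]? := by
  induction h with
  | refl => rfl
  | ofR h1 _ h3 =>
    obtain ⟨rest, -, heq⟩ := rue_shape h3
    rw [heq, getElem?_append_lt _ _ (rue_len h1)]
  | one _ _ h3 => exact h3
  | trans _ _ ih1 ih2 => exact ih1.trans ih2

lemma rue_first {F : VeltmanFrame W'} {f : Ultrafilter W'} {σ : List (Set (Set W'))}
    {q : UEWorld W'} (h : Rue F (f, σ) q) :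
    ∃ (l : Set (Set W')) (g₁ : Ultrafilter W'), Assur F l f g₁ ∧
      q.2[σ.length]? = some l ∧
      ∀ E, E ∈ g₁ → Rinvhat F E ∈ g₁ → E ∈ q.1 ∧ Rinvhat F E ∈ q.1 := by
  induction h with
  | single h1 =>
    obtain ⟨l, heq, ha⟩ := h1
    refine ⟨l, _, ha, ?_, fun E h1 h2 => ⟨h1, h2⟩⟩
    rw [heq]
    exact List.getElem?_concat_length
  | @tail b c hb h2 ih =>
    obtain ⟨l, g₁, ha, hlab, hprop⟩ := ih
    obtain ⟨l'', heq'', ha''⟩ := h2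
    refine ⟨l, g₁, ha, ?_, fun E h1 h2 => assur_box ha'' (hprop E h1 h2).2⟩
    rw [heq'', getElem?_append_lt _ _ (rue_len hb), hlab]

lemma inwue_label {F : VeltmanFrame W'} {p : UEWorld W'} (h : InWue F p) :
    ∀ (i : ℕ) (l : Set (Set W')), p.2[i]? = some l →
      ∃ u v : Ultrafilter W', Assur F l u v ∧
        ∀ E, E ∈ v → Rinvhat F E ∈ v → E ∈ p.1 ∧ Rinvhat F E ∈ p.1 := by
  induction h with
  | nil f => intro i l h; simp at h
  | @cons f g σ l' h1 h2 ih =>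
    intro i l hgl
    by_cases hi : i < σ.length
    · rw [getElem?_append_lt _ _ hi] at hgl
      obtain ⟨u, v, ha, hp⟩ := ih i l hgl
      exact ⟨u, v, ha, fun E hE1 hE2 => assur_box h2 (hp E hE1 hE2).2⟩
    · have hieq : i = σ.length := by
        by_contra hne
        have : (σ ++ [l']).length ≤ i := by simp; omega
        rw [List.getElem?_eq_none this] at hgl
        cases hgl
      subst hieq
      rw [List.getElem?_concat_length] at hgl
      have hll : l' = l := Option.some.inj hgl
      subst hll
      exact ⟨f, g, h2, fun E hE1 hE2 => ⟨hE1, hE2⟩⟩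

lemma Sinv_univ_of_compl (F : VeltmanFrame W') (Y : Set W') :
    Sinv F (Set.univ : Set W')ᶜ Y = Set.univ := by
  ext w
  simp [Sinv]

end Aux

/-! ### The truth lemma for ultrafilter extensions -/

theorem truthLemma {W : Type*} (F : VeltmanFrame W) (ev : ℕ → Set W) (φ : ILFormula) :
    ∀ (f : Ultrafilter W) (σ : List (Set (Set W))), InWue F (f, σ) →
      (ueForces F ev φ (f, σ) ↔ interp F ev φ ∈ f) := by
  induction φ with
  | atom n => intro f σ _; exact Iff.rfl
  | falsum =>
    intro f σ _
    simp only [ueForces, interp, false_iff]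
    exact Ultrafilter.empty_notMem
  | impl α β ihα ihβ =>
    intro f σ hin
    simp only [ueForces, interp, Ultrafilter.union_mem_iff,
      Ultrafilter.compl_mem_iff_notMem, ihα f σ hin, ihβ f σ hin]
    tauto
  | box α ih =>
    intro f σ hin
    set A := interp F ev α with hA
    constructor
    · intro h
      by_contra hn
      -- build an ultrafilter g with Aᶜ ∈ g and Assur F ∅ f g
      obtain ⟨g, hgA, hgT⟩ := exists_ultrafilter_family F {C | Rinvhat F C ∈ f} Aᶜ
        (by simp only [Set.mem_setOf_eq, Rinvhat_univ]; exact Filter.univ_mem)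
        (by
          intro C₁ h₁ C₂ h₂
          simp only [Set.mem_setOf_eq, Rinvhat_inter] at *
          exact Filter.inter_mem h₁ h₂)
        (by
          intro C hC
          by_contra hne
          rw [Set.not_nonempty_iff_eq_empty] at hne
          have hsub : C ∩ Rinvhat F C ⊆ A := by
            intro x hx
            by_contra hxA
            have : x ∈ Aᶜ ∩ (C ∩ Rinvhat F C) := ⟨hxA, hx⟩
            rw [hne] at this
            exact this
          apply hn
          refine Filter.mem_of_superset hC ?_
          intro x hx
          exact Rinvhat_mono F hsub (by
            rw [Rinvhat_inter]
            exact ⟨hx, Rinvhat_idem F C hx⟩))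
      have hAs : Assur F (∅ : Set (Set W)) f g := by
        intro A' T hT hmem
        have hTe : T = ∅ := Finset.coe_eq_empty.mp (Set.subset_empty_iff.mp hT)
        subst hTe
        have : (⋃ S ∈ (∅ : Finset (Set W)), Sᶜ) = (∅ : Set W) := by simp
        rw [this, Sinv_compl_empty] at hmem
        exact hgT A' hmem
      have hq : ueForces F ev α (g, σ ++ [(∅ : Set (Set W))]) :=
        h _ (InWue.cons hin hAs) (Relation.TransGen.single ⟨∅, rfl, hAs⟩)
      have : A ∈ g := (ih g _ (InWue.cons hin hAs)).mp hq
      exact (Ultrafilter.compl_mem_iff_notMem.mp hgA) this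
    · intro h q hqin hqR
      have : A ∈ q.1 := (rue_box hqR h).1
      exact (ih q.1 q.2 hqin).mpr this
  | rhd α β ihα ihβ =>
    intro f σ hin
    classical
    set A := interp F ev α with hA
    set B := interp F ev β with hB
    constructor
    · -- forcing implies Sinv A B ∈ f
      intro h
      by_contra hnS
      have hcompl : (Sinv F A B)ᶜ ∈ f := Ultrafilter.compl_mem_iff_notMem.mpr hnS
      -- build g with A ∈ g and Assur F {Bᶜ} f g
      obtain ⟨g, hgA, hgT⟩ := exists_ultrafilter_family F {C | Sinv F Cᶜ B ∈ f} A
        (by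
          simp only [Set.mem_setOf_eq, Sinv_univ_of_compl]
          exact Filter.univ_mem)
        (by
          intro C₁ h₁ C₂ h₂
          simp only [Set.mem_setOf_eq] at *
          refine Filter.mem_of_superset (Filter.inter_mem h₁ h₂) ?_
          have := Sinv_inter_subset F C₁ C₂ B B
          rwa [Set.union_self] at this)
        (by
          intro C hC
          simp only [Set.mem_setOf_eq] at hC
          by_contra hne
          rw [Set.not_nonempty_iff_eq_empty] at hne
          have hmem : ((Sinv F A B)ᶜ ∩ Sinv F Cᶜ B) ∈ f := Filter.inter_mem hcompl hC
          obtain ⟨w, hw1, hw2⟩ := (Filter.nonempty_of_mem hmem)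
          rw [Set.mem_compl_iff] at hw1
          simp only [Sinv, Set.mem_setOf_eq] at hw1 hw2
          push_neg at hw1
          obtain ⟨u, huA, hru, hub⟩ := hw1
          have hu : u ∉ C ∨ ∃ z, F.R u z ∧ z ∉ C := by
            by_contra hc
            push_neg at hc
            have : u ∈ A ∩ (C ∩ Rinvhat F C) :=
              ⟨huA, hc.1, fun z hz => hc.2 z hz⟩
            rw [hne] at this
            exact this
          rcases hu with huC | ⟨z, huz, hzC⟩
          · obtain ⟨y, hyB, hsy⟩ := hw2 u huC hru
            exact hub y hyB hsy
          · have hwz : F.R w z := F.R_trans hru huz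
            obtain ⟨y, hyB, hsy⟩ := hw2 z hzC hwz
            exact hub y hyB (F.S_trans (F.R_sub_S hru hwz huz) hsy))
      have hAsg : Assur F ({Bᶜ} : Set (Set W)) f g := by
        intro A' T hT hmem
        have hsub : (⋃ S ∈ T, Sᶜ) ⊆ B := by
          intro y hy
          simp only [Set.mem_iUnion] at hy
          obtain ⟨S, hST, hyS⟩ := hy
          have hSB : S = Bᶜ := hT hST
          rw [hSB, compl_compl] at hyS
          exact hyS
        exact hgT A' (Filter.mem_of_superset hmem (Sinv_mono F hsub))
      set q : UEWorld W := (g, σ ++ [({Bᶜ} : Set (Set W))]) with hq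
      have hqin : InWue F q := InWue.cons hin hAsg
      have hqR : Rue F (f, σ) q := Relation.TransGen.single ⟨{Bᶜ}, rfl, hAsg⟩
      have hqα : ueForces F ev α q := (ihα g _ hqin).mpr hgA
      obtain ⟨r, hrin, hrS, hrβ⟩ := h q hqin hqR hqα
      have hBr : B ∈ r.1 := (ihβ r.1 r.2 hrin).mp hrβ
      have hlab : r.2[σ.length]? = some ({Bᶜ} : Set (Set W)) := by
        have hsg := sue_getElem hrS
        rw [← hsg, hq]
        exact List.getElem?_concat_length
      obtain ⟨u, v, hAuv, hprop⟩ := inwue_label hrin σ.length _ hlab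
      have hBv : Bᶜ ∈ v ∧ Rinvhat F Bᶜ ∈ v := by
        apply hAuv Bᶜ ({Bᶜ} : Finset (Set W)) (by simp)
        have : Sinv F (Bᶜ)ᶜ (⋃ S ∈ ({Bᶜ} : Finset (Set W)), Sᶜ) = Set.univ := by
          ext w
          simp only [Set.mem_univ, iff_true, Sinv, Set.mem_setOf_eq,
            Finset.mem_singleton, Set.iUnion_iUnion_eq_left, compl_compl]
          intro x hx hr
          exact ⟨x, hx, F.S_refl hr⟩
        rw [this]
        exact Filter.univ_mem
      have hBc : Bᶜ ∈ r.1 := (hprop Bᶜ hBv.1 hBv.2).1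
      exact (Ultrafilter.compl_mem_iff_notMem.mp hBc) hBr
    · -- Sinv A B ∈ f implies forcing
      intro hS q hqin hqR hqα
      have hAq : A ∈ q.1 := (ihα q.1 q.2 hqin).mp hqα
      obtain ⟨l, g₁, hAs, hlab, hprop⟩ := rue_first hqR
      -- build h with B ∈ h and Assur F l f h
      obtain ⟨h, hhB, hhT⟩ := exists_ultrafilter_family F
        {C | ∃ T : Finset (Set W), ↑T ⊆ l ∧ Sinv F Cᶜ (⋃ S ∈ T, Sᶜ) ∈ f} B
        (by
          refine ⟨∅, by simp, ?_⟩
          have : Sinv F (Set.univ : Set W)ᶜ (⋃ S ∈ (∅ : Finset (Set W)), Sᶜ) = Set.univ :=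
            Sinv_univ_of_compl F _
          rw [this]
          exact Filter.univ_mem)
        (by
          rintro C₁ ⟨T₁, hT₁, hm₁⟩ C₂ ⟨T₂, hT₂, hm₂⟩
          refine ⟨T₁ ∪ T₂, ?_, ?_⟩
          · rw [Finset.coe_union]
            exact Set.union_subset hT₁ hT₂
          · refine Filter.mem_of_superset (Filter.inter_mem hm₁ hm₂) ?_
            rw [Finset.set_biUnion_union]
            exact Sinv_inter_subset F C₁ C₂ _ _)
        (by
          rintro C ⟨T, hT, hm⟩
          by_contra hne
          rw [Set.not_nonempty_iff_eq_empty] at hne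
          have hkey : Sinv F A B ∩ Sinv F Cᶜ (⋃ S ∈ T, Sᶜ) ⊆ Sinv F A (⋃ S ∈ T, Sᶜ) :=
            Sinv_key F hne
          have hmem : Sinv F A (⋃ S ∈ T, Sᶜ) ∈ f :=
            Filter.mem_of_superset (Filter.inter_mem hS hm) hkey
          have hmem' : Sinv F (Aᶜ)ᶜ (⋃ S ∈ T, Sᶜ) ∈ f := by rwa [compl_compl]
          have := hAs Aᶜ T hT hmem'
          have hAcq : Aᶜ ∈ q.1 := (hprop Aᶜ this.1 this.2).1
          exact (Ultrafilter.compl_mem_iff_notMem.mp hAcq) hAq)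
      have hAsh : Assur F l f h := fun A' T hT hm => hhT A' ⟨T, hT, hm⟩
      refine ⟨(h, σ ++ [l]), InWue.cons hin hAsh, ?_, (ihβ h _ (InWue.cons hin hAsh)).mpr hhB⟩
      refine Sue.one hqR (Relation.TransGen.single ⟨l, rfl, hAsh⟩) ?_
      show q.2[σ.length]? = (σ ++ [l])[σ.length]?
      rw [hlab, List.getElem?_concat_length]

/-- Forcing agrees with the algebraic interpretation. -/
theorem forces_iff_interp {W : Type*} (F : VeltmanFrame W) (ev : ℕ → Set W) (φ : ILFormula) :
    ∀ x : W, forces F ev φ x ↔ x ∈ interp F ev φ := by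
  induction φ with
  | atom n => intro x; exact Iff.rfl
  | falsum => intro x; simp [forces, interp]
  | impl α β ihα ihβ =>
    intro x
    simp only [forces, interp, Set.mem_union, Set.mem_compl_iff, ihα x, ihβ x]
    tauto
  | box α ih =>
    intro x
    simp only [forces, interp, Rinvhat, Set.mem_setOf_eq]
    exact ⟨fun h v hv => (ih v).mp (h v hv), fun h v hv => (ih v).mpr (h v hv)⟩
  | rhd α β ihα ihβ =>
    intro x
    simp only [forces, interp, Sinv, Set.mem_setOf_eq]
    constructor
    · intro h u hu hru
      obtain ⟨v, hs, hv⟩ := h u hru ((ihα u).mpr hu)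
      exact ⟨v, (ihβ v).mp hv, hs⟩
    · intro h u hru hu
      obtain ⟨v, hv, hs⟩ := h u ((ihα u).mp hu) hru
      exact ⟨v, hs, (ihβ v).mpr hv⟩

/-- truth at a world x agrees with truth at any world of the
    ultrafilter extension whose first component is the principal ultrafilter Π_x. -/
theorem forces_iff_ueForces_principal {W : Type*} (F : VeltmanFrame W)
    (ev : ℕ → Set W) (φ : ILFormula) (x : W) (σ : List (Set (Set W)))
    (hin : InWue F ((pure x : Ultrafilter W), σ)) :
    forces F ev φ x ↔ ueForces F ev φ ((pure x : Ultrafilter W), σ) := by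
  rw [forces_iff_interp F ev φ x, truthLemma F ev φ (pure x) σ hin, Ultrafilter.mem_pure]
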